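/- The derived-term automaton (Boolean case of the paper's main theorem): for every regular expression E over α, the NFA whose state type is the subtype { K : RegularExpression α // K ∈ {E} ∪ DT(E) }, whose transition from a state K on letter a is the set of states whose underlying expression lies in ∂ₐ(K) (well defined since ∂ₐ(K) ⊆ DT(E) for K ∈ {E} ∪ DT(E)), whose unique initial state is E, and whose accepting states are the nullable ones, is a finite automaton with at most ℓ(E) + 1 states accepting exactly the language matches E. -/

import Mathlib

open RegularExpression

open scoped Classical in
/-- The finite set of *derived terms* of a regular expression. -/
noncomputable def derivedTerms {α : Type*} :
    RegularExpression α → Finset (RegularExpression α)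
  | zero => ∅
  | epsilon => ∅
  | char _ => {1}
  | plus P Q => derivedTerms P ∪ derivedTerms Q
  | comp P Q => (derivedTerms P).image (fun K => K * Q) ∪ derivedTerms Q
  | RegularExpression.star P => (derivedTerms P).image (fun K => K * RegularExpression.star P)

/-- The *literal length* of a regular expression: the number of occurrences
of letters of the alphabet in it. -/
def litLength {α : Type*} : RegularExpression α → ℕ
  | zero => 0
  | epsilon => 0
  | char _ => 1
  | plus P Q => litLength P + litLength Q
  | comp P Q => litLength P + litLength Q
  | RegularExpression.star P => litLength P

open scoped Classical in
/-- The finite set of *Antimirov partial derivatives* of a regular expression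
with respect to a letter `a`. -/
noncomputable def aderiv {α : Type*} (a : α) :
    RegularExpression α → Finset (RegularExpression α)
  | zero => ∅
  | epsilon => ∅
  | char b => if b = a then {1} else ∅
  | plus P Q => aderiv a P ∪ aderiv a Q
  | comp P Q =>
      if [] ∈ P.matches' then (aderiv a P).image (fun K => K * Q) ∪ aderiv a Q
      else (aderiv a P).image (fun K => K * Q)
  | RegularExpression.star P => (aderiv a P).image (fun K => K * RegularExpression.star P)

namespace DTAux

open scoped Classical Computability

variable {α : Type*}

lemma cons_mem_kstar_aux {l : Language α} {a : α} :
    ∀ (S : List (List α)) (w : List α), (∀ y ∈ S, y ∈ l) → S.flatten = a :: w →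
      ∃ u v, a :: u ∈ l ∧ v ∈ l∗ ∧ u ++ v = w
  | [], w, _, h => by simp at h
  | y :: S, w, hS, h => by
    cases y with
    | nil =>
      exact cons_mem_kstar_aux S w (fun y hy => hS y (List.mem_cons_of_mem _ hy))
        (by simpa using h)
    | cons b u =>
      simp only [List.flatten_cons, List.cons_append, List.cons.injEq] at h
      obtain ⟨rfl, rfl⟩ := h
      exact ⟨u, S.flatten, hS _ List.mem_cons_self,
        Language.join_mem_kstar (fun y hy => hS y (List.mem_cons_of_mem _ hy)), rfl⟩

lemma cons_mem_kstar {l : Language α} {a : α} {w : List α} :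
    a :: w ∈ l∗ ↔ ∃ u v, a :: u ∈ l ∧ v ∈ l∗ ∧ u ++ v = w := by
  constructor
  · rw [Language.mem_kstar]
    rintro ⟨S, hflat, hS⟩
    exact cons_mem_kstar_aux S w hS hflat.symm
  · rintro ⟨u, v, hu, hv, rfl⟩
    rw [Language.mem_kstar] at hv ⊢
    obtain ⟨S, rfl, hS⟩ := hv
    refine ⟨(a :: u) :: S, rfl, ?_⟩
    rintro y hy
    rcases List.mem_cons.1 hy with rfl | hy
    · exact hu
    · exact hS y hy

theorem mem_aderiv (a : α) :
    ∀ (P : RegularExpression α) (w : List α),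
      a :: w ∈ P.matches' ↔ ∃ K ∈ aderiv a P, w ∈ K.matches'
  | zero, w => by
    constructor
    · intro h; exact absurd h (Language.notMem_zero _)
    · rintro ⟨K, hK, -⟩
      rw [show aderiv a (zero : RegularExpression α) = ∅ from rfl] at hK
      exact absurd hK (Finset.notMem_empty _)
  | epsilon, w => by
    constructor
    · intro h
      exact absurd (Language.mem_one _ |>.1 h) (List.cons_ne_nil _ _)
    · rintro ⟨K, hK, -⟩
      rw [show aderiv a (epsilon : RegularExpression α) = ∅ from rfl] at hK
      exact absurd hK (Finset.notMem_empty _)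
  | char b, w => by
    rw [show aderiv a (char b) = if b = a then {1} else ∅ from rfl]
    rw [matches'_char]
    by_cases h : b = a
    · subst h
      rw [if_pos rfl]
      constructor
      · intro hmem
        have := Set.mem_singleton_iff.1 hmem
        simp only [List.cons.injEq] at this
        exact ⟨1, Finset.mem_singleton_self _, by simp [matches'_epsilon, this.2]⟩
      · rintro ⟨K, hK, hw⟩
        rw [Finset.mem_singleton] at hK
        subst hK
        have : w = [] := Language.mem_one _ |>.1 hw
        subst this
        rfl
    · rw [if_neg h]
      constructor
      · intro hmem
        have := Set.mem_singleton_iff.1 hmem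
        simp only [List.cons.injEq] at this
        exact absurd this.1.symm h
      · rintro ⟨K, hK, -⟩
        exact absurd hK (Finset.notMem_empty _)
  | plus P Q, w => by
    rw [show aderiv a (plus P Q) = aderiv a P ∪ aderiv a Q from rfl]
    have hP := mem_aderiv a P w
    have hQ := mem_aderiv a Q w
    constructor
    · intro h
      rcases (Language.mem_add _ _ _).1 h with h | h
      · obtain ⟨K, hK, hw⟩ := hP.1 h
        exact ⟨K, Finset.mem_union_left _ hK, hw⟩
      · obtain ⟨K, hK, hw⟩ := hQ.1 h
        exact ⟨K, Finset.mem_union_right _ hK, hw⟩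
    · rintro ⟨K, hK, hw⟩
      rcases Finset.mem_union.1 hK with hK | hK
      · exact (Language.mem_add _ _ _).2 (Or.inl (hP.2 ⟨K, hK, hw⟩))
      · exact (Language.mem_add _ _ _).2 (Or.inr (hQ.2 ⟨K, hK, hw⟩))
  | comp P Q, w => by
    rw [show aderiv a (comp P Q) =
        (if [] ∈ P.matches' then (aderiv a P).image (fun K => K * Q) ∪ aderiv a Q
          else (aderiv a P).image (fun K => K * Q)) from rfl]
    have hmm : (comp P Q).matches' = P.matches' * Q.matches' := rfl
    constructor
    · intro h
      rw [hmm, Language.mem_mul] at h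
      obtain ⟨u, hu, v, hv, huv⟩ := h
      cases u with
      | nil =>
        simp only [List.nil_append] at huv
        subst huv
        rw [if_pos hu]
        obtain ⟨K, hK, hw⟩ := (mem_aderiv a Q w).1 hv
        exact ⟨K, Finset.mem_union_right _ hK, hw⟩
      | cons b u =>
        simp only [List.cons_append, List.cons.injEq] at huv
        obtain ⟨rfl, rfl⟩ := huv
        obtain ⟨K, hK, hu'⟩ := (mem_aderiv b P u).1 hu
        have himg : K * Q ∈ (aderiv b P).image (fun K => K * Q) :=
          Finset.mem_image.2 ⟨K, hK, rfl⟩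
        have hwm : u ++ v ∈ (K * Q).matches' := Language.append_mem_mul hu' hv
        split_ifs with hnull
        · exact ⟨K * Q, Finset.mem_union_left _ himg, hwm⟩
        · exact ⟨K * Q, himg, hwm⟩
    · rintro ⟨K, hK, hw⟩
      rw [hmm]
      have himg : K ∈ (aderiv a P).image (fun K => K * Q) → a :: w ∈ P.matches' * Q.matches' := by
        intro hK'
        obtain ⟨K', hKm, rfl⟩ := Finset.mem_image.1 hK'
        rw [show (K' * Q).matches' = K'.matches' * Q.matches' from rfl,
          Language.mem_mul] at hw
        obtain ⟨u, hu, v, hv, rfl⟩ := hw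
        have : a :: u ∈ P.matches' := (mem_aderiv a P u).2 ⟨K', hKm, hu⟩
        exact Language.append_mem_mul this hv
      split_ifs at hK with hnull
      · rcases Finset.mem_union.1 hK with hK' | hK'
        · exact himg hK'
        · have : a :: w ∈ Q.matches' := (mem_aderiv a Q w).2 ⟨K, hK', hw⟩
          exact Language.append_mem_mul hnull this
      · exact himg hK
  | RegularExpression.star P, w => by
    rw [show aderiv a (RegularExpression.star P)
        = (aderiv a P).image (fun K => K * RegularExpression.star P) from rfl]
    have hmm : (RegularExpression.star P).matches' = P.matches'∗ := rfl
    rw [hmm, cons_mem_kstar]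
    constructor
    · rintro ⟨u, v, hu, hv, rfl⟩
      obtain ⟨K, hK, hu'⟩ := (mem_aderiv a P u).1 hu
      refine ⟨K * RegularExpression.star P, Finset.mem_image.2 ⟨K, hK, rfl⟩, ?_⟩
      exact Language.append_mem_mul hu' hv
    · rintro ⟨K, hK, hw⟩
      obtain ⟨K', hK', rfl⟩ := Finset.mem_image.1 hK
      rw [show (K' * RegularExpression.star P).matches' = K'.matches' * P.matches'∗ from rfl,
        Language.mem_mul] at hw
      obtain ⟨u, hu, v, hv, rfl⟩ := hw
      exact ⟨u, v, (mem_aderiv a P u).2 ⟨K', hK', hu⟩, hv, rfl⟩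

lemma aderiv_subset_derivedTerms (a : α) :
    ∀ E : RegularExpression α, aderiv a E ⊆ derivedTerms E
  | zero => by rw [show aderiv a (zero : RegularExpression α) = ∅ from rfl]; simp
  | epsilon => by rw [show aderiv a (epsilon : RegularExpression α) = ∅ from rfl]; simp
  | char b => by
    rw [show aderiv a (char b) = if b = a then {1} else ∅ from rfl,
      show derivedTerms (char b) = {1} from rfl]
    split_ifs <;> simp
  | plus P Q => by
    rw [show aderiv a (plus P Q) = aderiv a P ∪ aderiv a Q from rfl,
      show derivedTerms (plus P Q) = derivedTerms P ∪ derivedTerms Q from rfl]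
    exact Finset.union_subset_union (aderiv_subset_derivedTerms a P)
      (aderiv_subset_derivedTerms a Q)
  | comp P Q => by
    rw [show aderiv a (comp P Q) =
        (if [] ∈ P.matches' then (aderiv a P).image (fun K => K * Q) ∪ aderiv a Q
          else (aderiv a P).image (fun K => K * Q)) from rfl,
      show derivedTerms (comp P Q)
        = (derivedTerms P).image (fun K => K * Q) ∪ derivedTerms Q from rfl]
    have h1 : (aderiv a P).image (fun K => K * Q) ⊆ (derivedTerms P).image (fun K => K * Q) :=
      Finset.image_subset_image (aderiv_subset_derivedTerms a P)
    split_ifs with h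
    · exact Finset.union_subset_union h1 (aderiv_subset_derivedTerms a Q)
    · exact h1.trans (Finset.subset_union_left)
  | RegularExpression.star P => by
    rw [show aderiv a (RegularExpression.star P)
        = (aderiv a P).image (fun K => K * RegularExpression.star P) from rfl,
      show derivedTerms (RegularExpression.star P)
        = (derivedTerms P).image (fun K => K * RegularExpression.star P) from rfl]
    exact Finset.image_subset_image (aderiv_subset_derivedTerms a P)

lemma aderiv_derivedTerms_subset (a : α) :
    ∀ (E : RegularExpression α) (K : RegularExpression α),
      K ∈ derivedTerms E → aderiv a K ⊆ derivedTerms E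
  | zero, K, hK => by
    rw [show derivedTerms (zero : RegularExpression α) = ∅ from rfl] at hK
    simp at hK
  | epsilon, K, hK => by
    rw [show derivedTerms (epsilon : RegularExpression α) = ∅ from rfl] at hK
    simp at hK
  | char b, K, hK => by
    rw [show derivedTerms (char b) = {1} from rfl] at hK
    rw [Finset.mem_singleton] at hK
    subst hK
    rw [show aderiv a (1 : RegularExpression α) = ∅ from rfl]
    simp
  | plus P Q, K, hK => by
    rw [show derivedTerms (plus P Q) = derivedTerms P ∪ derivedTerms Q from rfl] at hK ⊢
    rcases Finset.mem_union.1 hK with hK | hK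
    · exact (aderiv_derivedTerms_subset a P K hK).trans Finset.subset_union_left
    · exact (aderiv_derivedTerms_subset a Q K hK).trans Finset.subset_union_right
  | comp P Q, K, hK => by
    rw [show derivedTerms (comp P Q)
        = (derivedTerms P).image (fun K => K * Q) ∪ derivedTerms Q from rfl] at hK ⊢
    rcases Finset.mem_union.1 hK with hK | hK
    · obtain ⟨K', hK', rfl⟩ := Finset.mem_image.1 hK
      rw [show aderiv a (K' * Q) =
          (if [] ∈ K'.matches' then (aderiv a K').image (fun K => K * Q) ∪ aderiv a Q
            else (aderiv a K').image (fun K => K * Q)) from rfl]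
      have h1 : (aderiv a K').image (fun K => K * Q) ⊆ (derivedTerms P).image (fun K => K * Q) :=
        Finset.image_subset_image (aderiv_derivedTerms_subset a P K' hK')
      have h2 : aderiv a Q ⊆ derivedTerms Q := aderiv_subset_derivedTerms a Q
      split_ifs with h
      · exact Finset.union_subset (h1.trans Finset.subset_union_left)
          (h2.trans Finset.subset_union_right)
      · exact h1.trans Finset.subset_union_left
    · exact (aderiv_derivedTerms_subset a Q K hK).trans Finset.subset_union_right
  | RegularExpression.star P, K, hK => by
    rw [show derivedTerms (RegularExpression.star P)
        = (derivedTerms P).image (fun K => K * RegularExpression.star P) from rfl] at hK ⊢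
    obtain ⟨K', hK', rfl⟩ := Finset.mem_image.1 hK
    rw [show aderiv a (K' * RegularExpression.star P) =
        (if [] ∈ K'.matches'
          then (aderiv a K').image (fun K => K * RegularExpression.star P)
            ∪ aderiv a (RegularExpression.star P)
          else (aderiv a K').image (fun K => K * RegularExpression.star P)) from rfl]
    have h1 : (aderiv a K').image (fun K => K * RegularExpression.star P)
        ⊆ (derivedTerms P).image (fun K => K * RegularExpression.star P) :=
      Finset.image_subset_image (aderiv_derivedTerms_subset a P K' hK')
    have h2 : aderiv a (RegularExpression.star P)
        ⊆ (derivedTerms P).image (fun K => K * RegularExpression.star P) := by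
      rw [show aderiv a (RegularExpression.star P)
          = (aderiv a P).image (fun K => K * RegularExpression.star P) from rfl]
      exact Finset.image_subset_image (aderiv_subset_derivedTerms a P)
    split_ifs with h
    · exact Finset.union_subset h1 h2
    · exact h1

lemma aderiv_state_subset (a : α) (E K : RegularExpression α)
    (hK : K ∈ insert E (derivedTerms E)) : aderiv a K ⊆ derivedTerms E := by
  rcases Finset.mem_insert.1 hK with rfl | hK
  · exact aderiv_subset_derivedTerms a K
  · exact aderiv_derivedTerms_subset a E K hK

lemma card_derivedTerms_le : ∀ E : RegularExpression α, (derivedTerms E).card ≤ litLength E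
  | zero => by rw [show derivedTerms (zero : RegularExpression α) = ∅ from rfl]; simp
  | epsilon => by rw [show derivedTerms (epsilon : RegularExpression α) = ∅ from rfl]; simp
  | char b => by
    rw [show derivedTerms (char b) = {1} from rfl]; simp [litLength]
  | plus P Q => by
    rw [show derivedTerms (plus P Q) = derivedTerms P ∪ derivedTerms Q from rfl]
    calc (derivedTerms P ∪ derivedTerms Q).card
        ≤ (derivedTerms P).card + (derivedTerms Q).card := Finset.card_union_le _ _
      _ ≤ litLength P + litLength Q :=
          Nat.add_le_add (card_derivedTerms_le P) (card_derivedTerms_le Q)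
  | comp P Q => by
    rw [show derivedTerms (comp P Q)
        = (derivedTerms P).image (fun K => K * Q) ∪ derivedTerms Q from rfl]
    calc ((derivedTerms P).image (fun K => K * Q) ∪ derivedTerms Q).card
        ≤ ((derivedTerms P).image (fun K => K * Q)).card + (derivedTerms Q).card :=
          Finset.card_union_le _ _
      _ ≤ (derivedTerms P).card + (derivedTerms Q).card :=
          Nat.add_le_add_right (Finset.card_image_le) _
      _ ≤ litLength P + litLength Q :=
          Nat.add_le_add (card_derivedTerms_le P) (card_derivedTerms_le Q)
  | RegularExpression.star P => by
    rw [show derivedTerms (RegularExpression.star P)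
        = (derivedTerms P).image (fun K => K * RegularExpression.star P) from rfl]
    exact Finset.card_image_le.trans (card_derivedTerms_le P)

end DTAux

open scoped Classical in
/-- The derived-term automaton: the NFA with state set `{E} ∪ DT(E)`,
transitions given by Antimirov derivation, initial state `E` and accepting
states the nullable expressions, has at most `ℓ(E) + 1` states and accepts
exactly the language `matches E`. -/
theorem derivedTerm_nfa {α : Type*} [DecidableEq α]
    (E : RegularExpression α) :
    (⟨fun (q : {K : RegularExpression α // K ∈ insert E (derivedTerms E)}) a =>
        { p | p.1 ∈ aderiv a q.1 },
      {⟨E, Finset.mem_insert_self E (derivedTerms E)⟩},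
      { q | [] ∈ q.1.matches' }⟩ :
        NFA α {K : RegularExpression α // K ∈ insert E (derivedTerms E)}).accepts
      = E.matches' ∧
    Fintype.card {K : RegularExpression α // K ∈ insert E (derivedTerms E)} ≤
      litLength E + 1 := by
  set M : NFA α {K : RegularExpression α // K ∈ insert E (derivedTerms E)} :=
    ⟨fun q a => { p | p.1 ∈ aderiv a q.1 },
      {⟨E, Finset.mem_insert_self E (derivedTerms E)⟩},
      { q | [] ∈ q.1.matches' }⟩ with hM
  constructor
  · have key : ∀ (w : List α) (S : Set {K : RegularExpression α // K ∈ insert E (derivedTerms E)}),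
        (∃ p ∈ M.evalFrom S w, [] ∈ p.1.matches') ↔ ∃ q ∈ S, w ∈ q.1.matches' := by
      intro w
      induction w with
      | nil => intro S; simp [NFA.evalFrom_nil]
      | cons a w ih =>
        intro S
        have hstep : M.evalFrom S (a :: w) = M.evalFrom (M.stepSet S a) w := rfl
        rw [hstep, ih]
        constructor
        · rintro ⟨q', hq', hw⟩
          rw [NFA.mem_stepSet] at hq'
          obtain ⟨q, hq, hstep'⟩ := hq'
          exact ⟨q, hq, (DTAux.mem_aderiv a q.1 w).2 ⟨q'.1, hstep', hw⟩⟩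
        · rintro ⟨q, hq, hw⟩
          obtain ⟨K, hK, hw'⟩ := (DTAux.mem_aderiv a q.1 w).1 hw
          have hKmem : K ∈ insert E (derivedTerms E) :=
            Finset.mem_insert_of_mem (DTAux.aderiv_state_subset a E q.1 q.2 hK)
          exact ⟨⟨K, hKmem⟩, NFA.mem_stepSet.2 ⟨q, hq, hK⟩, hw'⟩
    ext x
    rw [NFA.mem_accepts]
    constructor
    · rintro ⟨p, hacc, heval⟩
      obtain ⟨q, hq, hx⟩ := (key x M.start).1 ⟨p, heval, hacc⟩
      rw [hM] at hq
      simp only [Set.mem_singleton_iff] at hq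
      subst hq
      exact hx
    · intro hx
      obtain ⟨p, heval, hacc⟩ := (key x M.start).2
        ⟨⟨E, Finset.mem_insert_self E (derivedTerms E)⟩, rfl, hx⟩
      exact ⟨p, hacc, heval⟩
  · have hcard : Fintype.card {K : RegularExpression α // K ∈ insert E (derivedTerms E)}
        = (insert E (derivedTerms E)).card := Fintype.card_coe _
    rw [hcard]
    calc (insert E (derivedTerms E)).card ≤ (derivedTerms E).card + 1 :=
          Finset.card_insert_le _ _
      _ ≤ litLength E + 1 := Nat.add_le_add_right (DTAux.card_derivedTerms_le E) 1
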